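/- (Graph lemma.) Let γ : [0,1] → ℂ be a C² regular curve with Im γ(t) > 0 for all t, whose hyperbolic geodesic curvature satisfies |κ(t)| ≤ 1 for all t, and suppose γ(0) = i and γ'(0) is a negative real number. Then the function t ↦ Arg γ(t) (principal argument, taking values in (0,π)) is strictly increasing on [0,1]; in particular the image of γ meets each ray {t·e^{iα} : t > 0}, α ∈ (0,π), at most once. -/

import Mathlib

open Set

/-- Euclidean curvature of a plane curve `γ : ℝ → ℂ`. -/
noncomputable def kappaE (γ : ℝ → ℂ) (t : ℝ) : ℝ :=
  ((starRingEnd ℂ) (deriv γ t) * deriv (deriv γ) t).im / ‖deriv γ t‖ ^ 3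

/-- Hyperbolic geodesic curvature in the upper half-plane model. -/
noncomputable def kappaH (γ : ℝ → ℂ) (t : ℝ) : ℝ :=
  (γ t).im * kappaE γ t + (deriv γ t).re / ‖deriv γ t‖

/-- `θ` is a continuous argument for the unit tangent of `γ` on `[0,1]`. -/
def IsArgument (γ : ℝ → ℂ) (θ : ℝ → ℝ) : Prop :=
  ContinuousOn θ (Icc 0 1) ∧
  ∀ t ∈ Icc (0:ℝ) 1,
    deriv γ t / (‖deriv γ t‖ : ℂ) = Complex.exp (θ t * Complex.I)


lemma aux_one_sub_cos_le {x : ℝ} (hx : 0 ≤ x) : 1 - Real.cos x ≤ x := by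
  rcases le_total x 2 with h | h
  · have h1 : Real.cos x = Real.cos (2 * (x/2)) := by ring_nf
    rw [h1, Real.cos_two_mul' (x/2)]
    have hs : Real.sin (x/2) ≤ x/2 := Real.sin_le (by linarith)
    have hs0 : 0 ≤ Real.sin (x/2) := by
      apply Real.sin_nonneg_of_nonneg_of_le_pi (by linarith)
      have := Real.pi_gt_three
      linarith
    have hc : Real.sin (x/2)^2 + Real.cos (x/2)^2 = 1 := Real.sin_sq_add_cos_sq _
    nlinarith
  · have := Real.neg_one_le_cos x
    linarith

lemma aux_trig (a b : ℝ) :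
    Real.cos a + 2 * Real.sin b * Real.sin (a - b) = Real.cos (a - 2*b) := by
  have h1 : a - 2*b = (a - b) - b := by ring
  rw [h1, Real.cos_sub, Real.sin_sub, Real.cos_sub]
  linear_combination (-Real.cos a) * (Real.sin_sq_add_cos_sq b)

lemma aux_gronwall {u u' : ℝ → ℝ} {K : ℝ}
    (hd : ∀ t ∈ Icc (0:ℝ) 1, HasDerivAt u (u' t) t)
    (h0 : u 0 = 0)
    (hb : ∀ t ∈ Icc (0:ℝ) 1, 0 < u t → u' t ≤ K * u t) :
    ∀ t ∈ Icc (0:ℝ) 1, u t ≤ 0 := by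
  intro t₁ ht₁
  by_contra hpos
  push_neg at hpos
  have hcont : ContinuousOn u (Icc 0 1) :=
    fun s hs => ((hd s hs).continuousAt).continuousWithinAt
  have hsub : Icc 0 t₁ ⊆ Icc (0:ℝ) 1 := Icc_subset_Icc le_rfl ht₁.2
  set S : Set ℝ := Icc 0 t₁ ∩ u ⁻¹' (Iic 0) with hS
  have hSne : S.Nonempty := ⟨0, ⟨le_rfl, ht₁.1⟩, by simp [h0]⟩
  have hSbdd : BddAbove S := ⟨t₁, fun x hx => hx.1.2⟩
  have hSclosed : IsClosed S := by
    have hch : ContinuousOn u (Icc 0 t₁) := hcont.mono hsub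
    exact hch.preimage_isClosed_of_isClosed isClosed_Icc isClosed_Iic
  set s₀ := sSup S with hs₀
  have hs₀S : s₀ ∈ S := hSclosed.csSup_mem hSne hSbdd
  have hs₀le : u s₀ ≤ 0 := hs₀S.2
  have hs₀t₁ : s₀ < t₁ := by
    refine lt_of_le_of_ne hs₀S.1.2 (fun he => ?_)
    rw [he] at hs₀le
    linarith
  have hs₀0 : 0 ≤ s₀ := hs₀S.1.1
  have hmid : ∀ s ∈ Ioc s₀ t₁, 0 < u s := by
    intro s hs
    by_contra hns; push_neg at hns
    have hmem : s ∈ S := ⟨⟨hs₀0.trans hs.1.le, hs.2⟩, hns⟩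
    exact absurd (le_csSup hSbdd hmem) (not_le.mpr hs.1)
  set q : ℝ → ℝ := fun s => u s * Real.exp (-K * s) with hq
  have hqd : ∀ x ∈ Icc (0:ℝ) 1,
      HasDerivAt q (u' x * Real.exp (-K*x) + u x * (Real.exp (-K*x) * (-K))) x := by
    intro x hx
    have he : HasDerivAt (fun s : ℝ => Real.exp (-K*s)) (Real.exp (-K*x) * (-K)) x := by
      have h1 : HasDerivAt (fun s : ℝ => -K*s) (-K) x := by
        simpa using (hasDerivAt_id x).const_mul (-K)
      exact (Real.hasDerivAt_exp (-K*x)).comp x h1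
    exact (hd x hx).mul he
  have hanti : AntitoneOn q (Icc s₀ t₁) := by
    have hsub2 : Icc s₀ t₁ ⊆ Icc (0:ℝ) 1 := Icc_subset_Icc hs₀0 ht₁.2
    apply antitoneOn_of_deriv_nonpos (convex_Icc _ _)
    · exact fun x hx => ((hqd x (hsub2 hx)).continuousAt).continuousWithinAt
    · intro x hx
      rw [interior_Icc] at hx
      exact ((hqd x (hsub2 (Ioo_subset_Icc_self hx))).differentiableAt).differentiableWithinAt
    · intro x hx
      rw [interior_Icc] at hx
      have hx1 : x ∈ Icc (0:ℝ) 1 := hsub2 (Ioo_subset_Icc_self hx)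
      rw [(hqd x hx1).deriv]
      have hhx : 0 < u x := hmid x ⟨hx.1, hx.2.le⟩
      have hbx := hb x hx1 hhx
      have hex := Real.exp_pos (-K*x)
      nlinarith
  have hqle := hanti (left_mem_Icc.mpr hs₀t₁.le) (right_mem_Icc.mpr hs₀t₁.le) hs₀t₁.le
  have h1 : 0 < u t₁ * Real.exp (-K*t₁) := mul_pos hpos (Real.exp_pos _)
  have h2 : u s₀ * Real.exp (-K*s₀) ≤ 0 :=
    mul_nonpos_of_nonpos_of_nonneg hs₀le (Real.exp_pos _).le
  simp only [hq] at hqle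
  linarith

lemma aux_polar_im (r a : ℝ) : ((r:ℂ) * Complex.exp ((a:ℂ) * Complex.I)).im = r * Real.sin a := by
  simp [Complex.mul_im, Complex.exp_ofReal_mul_I_re, Complex.exp_ofReal_mul_I_im]

lemma aux_polar_re (r a : ℝ) : ((r:ℂ) * Complex.exp ((a:ℂ) * Complex.I)).re = r * Real.cos a := by
  simp [Complex.mul_re, Complex.exp_ofReal_mul_I_re, Complex.exp_ofReal_mul_I_im]

lemma aux_polar_abs {r : ℝ} (hr : 0 ≤ r) (a : ℝ) :
    ‖(r:ℂ) * Complex.exp ((a:ℂ) * Complex.I)‖ = r := by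
  rw [norm_mul, Complex.norm_real, Complex.norm_exp_ofReal_mul_I, Real.norm_eq_abs, abs_of_nonneg hr, mul_one]

lemma aux_polar_div {r₁ r₂ a b : ℝ} (h₂ : r₂ ≠ 0) :
    ((r₁:ℂ) * Complex.exp ((a:ℂ) * Complex.I)) / ((r₂:ℂ) * Complex.exp ((b:ℂ) * Complex.I))
      = ((r₁/r₂ : ℝ):ℂ) * Complex.exp (((a - b : ℝ):ℂ) * Complex.I) := by
  have h2 : (r₂:ℂ) ≠ 0 := by exact_mod_cast h₂
  rw [div_eq_iff (mul_ne_zero h2 (Complex.exp_ne_zero _))]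
  symm
  have h3 : ((a - b : ℝ):ℂ) * Complex.I + (b:ℂ) * Complex.I = (a:ℂ) * Complex.I := by
    push_cast; ring
  calc ((r₁/r₂ : ℝ):ℂ) * Complex.exp (((a - b : ℝ):ℂ) * Complex.I) * ((r₂:ℂ) * Complex.exp ((b:ℂ) * Complex.I))
      = (((r₁/r₂) * r₂ : ℝ):ℂ) * (Complex.exp (((a - b : ℝ):ℂ) * Complex.I) * Complex.exp ((b:ℂ) * Complex.I)) := by
        push_cast; ring
    _ = ((r₁:ℝ):ℂ) * Complex.exp ((a:ℂ) * Complex.I) := by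
        rw [← Complex.exp_add, h3]
        congr 2
        field_simp

open Real in
theorem arg_strictMono_of_small_curvature (γ : ℝ → ℂ) (hγ : ContDiff ℝ 2 γ)
    (hreg : ∀ t ∈ Icc (0:ℝ) 1, deriv γ t ≠ 0)
    (him : ∀ t ∈ Icc (0:ℝ) 1, 0 < (γ t).im)
    (hκ : ∀ t ∈ Icc (0:ℝ) 1, |kappaH γ t| ≤ 1)
    (h0 : γ 0 = Complex.I)
    (hd0im : (deriv γ 0).im = 0) (hd0re : (deriv γ 0).re < 0) :
    StrictMonoOn (fun t => (γ t).arg) (Icc (0:ℝ) 1) := by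
  have h01 : (0:ℝ) ∈ Icc (0:ℝ) 1 := by norm_num
  -- smoothness facts
  have hγ1 : ContDiff ℝ 1 (deriv γ) := by
    have h2 : ((2:ℕ) : WithTop ℕ∞) = (1:WithTop ℕ∞) + 1 := by norm_num
    have := (contDiff_succ_iff_deriv (n := 1)).mp (by rw [← h2]; exact_mod_cast hγ)
    exact this.2.2
  have hdiffγ : Differentiable ℝ γ := hγ.differentiable two_ne_zero
  have hdiffγ' : Differentiable ℝ (deriv γ) := hγ1.differentiable one_ne_zero
  have hcγ : Continuous γ := hγ.continuous
  have hcγ' : Continuous (deriv γ) := hγ1.continuous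
  have hcγ'' : Continuous (deriv (deriv γ)) := hγ1.continuous_deriv le_rfl
  have hγne : ∀ t ∈ Icc (0:ℝ) 1, γ t ≠ 0 := by
    intro t ht h
    have := him t ht
    rw [h] at this
    simp at this
  set F : ℝ → ℂ := fun t => deriv (deriv γ) t / deriv γ t with hF
  set G : ℝ → ℂ := fun t => deriv γ t / γ t with hG
  have hFmeas : MeasureTheory.StronglyMeasurable F :=
    ((hcγ''.measurable.div hcγ'.measurable)).stronglyMeasurable
  have hGmeas : MeasureTheory.StronglyMeasurable G :=
    ((hcγ'.measurable.div hcγ.measurable)).stronglyMeasurable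
  have hFcont : ∀ t ∈ Icc (0:ℝ) 1, ContinuousAt F t := by
    intro t ht
    exact (hcγ''.continuousAt).div (hcγ'.continuousAt) (hreg t ht)
  have hGcont : ∀ t ∈ Icc (0:ℝ) 1, ContinuousAt G t := by
    intro t ht
    exact (hcγ'.continuousAt).div (hcγ.continuousAt) (hγne t ht)
  set Λ : ℝ → ℂ := fun t => ∫ s in (0:ℝ)..t, F s with hΛ
  set M : ℝ → ℂ := fun t => ∫ s in (0:ℝ)..t, G s with hM
  have hΛd : ∀ t ∈ Icc (0:ℝ) 1, HasDerivAt Λ (F t) t := by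
    intro t ht
    apply intervalIntegral.integral_hasDerivAt_right
    · apply ContinuousOn.intervalIntegrable
      intro s hs
      rw [Set.uIcc_of_le ht.1] at hs
      exact (hFcont s ⟨hs.1, hs.2.trans ht.2⟩).continuousWithinAt
    · exact hFmeas.stronglyMeasurableAtFilter
    · exact hFcont t ht
  have hMd : ∀ t ∈ Icc (0:ℝ) 1, HasDerivAt M (G t) t := by
    intro t ht
    apply intervalIntegral.integral_hasDerivAt_right
    · apply ContinuousOn.intervalIntegrable
      intro s hs
      rw [Set.uIcc_of_le ht.1] at hs
      exact (hGcont s ⟨hs.1, hs.2.trans ht.2⟩).continuousWithinAt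
    · exact hGmeas.stronglyMeasurableAtFilter
    · exact hGcont t ht
  have hΛ0 : Λ 0 = 0 := intervalIntegral.integral_same
  have hM0 : M 0 = 0 := intervalIntegral.integral_same
  have hkey : ∀ (f f' L : ℝ → ℂ),
      (∀ t ∈ Icc (0:ℝ) 1, HasDerivAt f (f' t) t) →
      (∀ t ∈ Icc (0:ℝ) 1, HasDerivAt L (f' t / f t) t) →
      (∀ t ∈ Icc (0:ℝ) 1, f t ≠ 0) → (L 0 = 0) →
      ∀ t ∈ Icc (0:ℝ) 1, f t = f 0 * Complex.exp (L t) := by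
    intro f f' L hfd hLd hfne hL0
    have hder : ∀ x ∈ Icc (0:ℝ) 1,
        HasDerivWithinAt (fun s => f s * Complex.exp (-L s)) 0 (Icc 0 1) x := by
      intro x hx
      have he : HasDerivAt (fun s => Complex.exp (-L s)) (Complex.exp (-L x) * (-(f' x / f x))) x :=
        ((hLd x hx).neg).cexp
      have hprod := (hfd x hx).mul he
      have hz : f' x * Complex.exp (-L x) + f x * (Complex.exp (-L x) * -(f' x / f x)) = 0 := by
        field_simp [hfne x hx]
        ring
      rw [hz] at hprod
      exact hprod.hasDerivWithinAt
    intro t ht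
    have hbound := Convex.norm_image_sub_le_of_norm_hasDerivWithin_le (C := 0) hder
      (fun x _ => by simp) (convex_Icc 0 1) h01 ht
    have heq : f t * Complex.exp (-L t) = f 0 * Complex.exp (-L 0) := by
      have h1 : ‖f t * Complex.exp (-L t) - f 0 * Complex.exp (-L 0)‖ ≤ 0 := by
        simpa using hbound
      have h3 : ‖f t * Complex.exp (-L t) - f 0 * Complex.exp (-L 0)‖ = 0 :=
        le_antisymm h1 (norm_nonneg _)
      rw [norm_eq_zero, sub_eq_zero] at h3
      exact h3
    rw [hL0] at heq
    simp only [neg_zero, Complex.exp_zero, mul_one] at heq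
    calc f t = f t * Complex.exp (-L t) * Complex.exp (L t) := by
          rw [mul_assoc, ← Complex.exp_add]; simp
      _ = f 0 * Complex.exp (L t) := by rw [heq]
  have hA : ∀ t ∈ Icc (0:ℝ) 1, γ t = Complex.I * Complex.exp (M t) := by
    have := hkey γ (deriv γ) M (fun t _ => (hdiffγ t).hasDerivAt) hMd hγne hM0
    intro t ht
    rw [this t ht, h0]
  have hB : ∀ t ∈ Icc (0:ℝ) 1, deriv γ t = deriv γ 0 * Complex.exp (Λ t) :=
    hkey (deriv γ) (deriv (deriv γ)) Λ (fun t _ => (hdiffγ' t).hasDerivAt) hΛd hreg hΛ0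
  -- real coordinates
  set φ : ℝ → ℝ := fun t => π/2 + (M t).im with hφ
  set θf : ℝ → ℝ := fun t => π + (Λ t).im with hθf
  set ρ : ℝ → ℝ := fun t => (M t).re with hρ
  set σf : ℝ → ℝ := fun t => (Λ t).re with hσf
  set c₀ : ℝ := -(deriv γ 0).re with hc₀
  have hc₀pos : 0 < c₀ := by rw [hc₀]; linarith
  have hd0 : deriv γ 0 = ((-c₀ : ℝ) : ℂ) := by
    apply Complex.ext <;> simp [hc₀, hd0im]
  have hφ0 : φ 0 = π/2 := by simp [hφ, hM0]
  have hθf0 : θf 0 = π := by simp [hθf, hΛ0]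
  -- polar forms
  have hApolar : ∀ t ∈ Icc (0:ℝ) 1,
      γ t = ((Real.exp (ρ t) : ℝ) : ℂ) * Complex.exp (((φ t : ℝ) : ℂ) * Complex.I) := by
    intro t ht
    rw [hA t ht]
    have hI : Complex.I = Complex.exp (((π/2 : ℝ) : ℂ) * Complex.I) := by
      rw [Complex.exp_mul_I, ← Complex.ofReal_cos, ← Complex.ofReal_sin,
        Real.cos_pi_div_two, Real.sin_pi_div_two]
      simp
    have h1 : M t = ((ρ t : ℝ):ℂ) + (((M t).im : ℝ):ℂ) * Complex.I := (Complex.re_add_im _).symm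
    conv_lhs => rw [hI, h1]
    rw [← Complex.exp_add, Complex.ofReal_exp, ← Complex.exp_add]
    congr 1
    simp only [hφ]
    push_cast
    ring
  have hBpolar : ∀ t ∈ Icc (0:ℝ) 1,
      deriv γ t = ((c₀ * Real.exp (σf t) : ℝ) : ℂ) * Complex.exp (((θf t : ℝ) : ℂ) * Complex.I) := by
    intro t ht
    rw [hB t ht, hd0]
    have hI : ((-c₀:ℝ):ℂ) = ((c₀:ℝ):ℂ) * Complex.exp (((π:ℝ):ℂ) * Complex.I) := by
      push_cast
      rw [Complex.exp_pi_mul_I]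
      ring
    have h1 : Λ t = ((σf t : ℝ):ℂ) + (((Λ t).im : ℝ):ℂ) * Complex.I := (Complex.re_add_im _).symm
    conv_lhs => rw [hI, h1]
    rw [mul_assoc, ← Complex.exp_add, Complex.ofReal_mul, Complex.ofReal_exp, mul_assoc,
      ← Complex.exp_add]
    congr 2
    simp only [hθf]
    push_cast
    ring
  -- components
  have himγ : ∀ t ∈ Icc (0:ℝ) 1, (γ t).im = Real.exp (ρ t) * Real.sin (φ t) := by
    intro t ht
    rw [hApolar t ht, aux_polar_im]
  have hsinφ : ∀ t ∈ Icc (0:ℝ) 1, 0 < Real.sin (φ t) := by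
    intro t ht
    have h1 := him t ht
    rw [himγ t ht] at h1
    have h2 := Real.exp_pos (ρ t)
    nlinarith
  have hreγ' : ∀ t ∈ Icc (0:ℝ) 1, (deriv γ t).re = (c₀ * Real.exp (σf t)) * Real.cos (θf t) := by
    intro t ht
    rw [hBpolar t ht, aux_polar_re]
  have hc₀σpos : ∀ t : ℝ, 0 < c₀ * Real.exp (σf t) :=
    fun t => mul_pos hc₀pos (Real.exp_pos _)
  have habsγ' : ∀ t ∈ Icc (0:ℝ) 1, ‖deriv γ t‖ = c₀ * Real.exp (σf t) := by
    intro t ht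
    rw [hBpolar t ht, aux_polar_abs (hc₀σpos t).le]
  -- derivatives of the angle functions
  have hφd : ∀ t ∈ Icc (0:ℝ) 1, HasDerivAt φ ((G t).im) t := by
    intro t ht
    have h1 : HasDerivAt (fun s => (M s).im) ((G t).im) t := by
      have h2 := (Complex.imCLM.hasFDerivAt (x := M t)).comp_hasDerivAt t (hMd t ht)
      exact h2
    have h3 := h1.const_add (π/2)
    simpa only [hφ] using h3
  have hθd : ∀ t ∈ Icc (0:ℝ) 1, HasDerivAt θf ((F t).im) t := by
    intro t ht
    have h1 : HasDerivAt (fun s => (Λ s).im) ((F t).im) t := by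
      have h2 := (Complex.imCLM.hasFDerivAt (x := Λ t)).comp_hasDerivAt t (hΛd t ht)
      exact h2
    have h3 := h1.const_add π
    simpa only [hθf] using h3
  -- continuity of coordinates
  have hMcont : ContinuousOn M (Icc 0 1) :=
    fun t ht => ((hMd t ht).continuousAt).continuousWithinAt
  have hΛcont : ContinuousOn Λ (Icc 0 1) :=
    fun t ht => ((hΛd t ht).continuousAt).continuousWithinAt
  have hφcont : ContinuousOn φ (Icc 0 1) := by
    rw [hφ]
    exact continuousOn_const.add (Complex.continuous_im.comp_continuousOn hMcont)
  have hρcont : ContinuousOn ρ (Icc 0 1) := by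
    rw [hρ]
    exact Complex.continuous_re.comp_continuousOn hMcont
  have hσcont : ContinuousOn σf (Icc 0 1) := by
    rw [hσf]
    exact Complex.continuous_re.comp_continuousOn hΛcont
  -- the positive factor
  set gs : ℝ → ℝ := fun t => c₀ * Real.exp (σf t) / (Real.exp (ρ t) * Real.sin (φ t)) with hgs
  have hgspos : ∀ t ∈ Icc (0:ℝ) 1, 0 < gs t := by
    intro t ht
    exact div_pos (hc₀σpos t) (mul_pos (Real.exp_pos _) (hsinφ t ht))
  have hgscont : ContinuousOn gs (Icc 0 1) := by
    rw [hgs]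
    apply ContinuousOn.div
    · exact continuousOn_const.mul (Real.continuous_exp.comp_continuousOn hσcont)
    · exact (Real.continuous_exp.comp_continuousOn hρcont).mul
        (Real.continuous_sin.comp_continuousOn hφcont)
    · intro t ht
      exact (mul_pos (Real.exp_pos _) (hsinφ t ht)).ne'
  obtain ⟨K, hKb⟩ := isCompact_Icc.exists_bound_of_continuousOn hgscont
  have hKbd : ∀ t ∈ Icc (0:ℝ) 1, gs t ≤ K := by
    intro t ht
    have := hKb t ht
    rw [Real.norm_eq_abs] at this
    exact (le_abs_self _).trans this
  -- trig expressions for the derivatives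
  have hGim : ∀ t ∈ Icc (0:ℝ) 1,
      (G t).im = gs t * (Real.sin (φ t) * Real.sin (θf t - φ t)) := by
    intro t ht
    have h1 : G t = (((c₀ * Real.exp (σf t)) / Real.exp (ρ t) : ℝ):ℂ)
        * Complex.exp (((θf t - φ t : ℝ):ℂ) * Complex.I) := by
      rw [hG]
      simp only
      rw [hBpolar t ht, hApolar t ht, aux_polar_div (Real.exp_pos (ρ t)).ne']
    rw [h1, aux_polar_im, hgs]
    have h2 := (Real.exp_pos (ρ t)).ne'
    have h3 := (hsinφ t ht).ne'
    field_simp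
  have hFim : ∀ t ∈ Icc (0:ℝ) 1,
      (F t).im = kappaE γ t * ‖deriv γ t‖ := by
    intro t ht
    have habs : ‖deriv γ t‖ ≠ 0 := norm_ne_zero_iff.mpr (hreg t ht)
    rw [hF]
    simp only
    rw [Complex.div_im, kappaE, Complex.normSq_eq_norm_sq]
    simp only [Complex.mul_im, Complex.conj_re, Complex.conj_im]
    field_simp
    ring
  have hFim2 : ∀ t ∈ Icc (0:ℝ) 1,
      (F t).im = gs t * (kappaH γ t - Real.cos (θf t)) := by
    intro t ht
    have h1 : kappaH γ t = (γ t).im * kappaE γ t + (deriv γ t).re / ‖deriv γ t‖ := rfl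
    rw [hreγ' t ht, habsγ' t ht, himγ t ht] at h1
    have hcos : (c₀ * Real.exp (σf t)) * Real.cos (θf t) / (c₀ * Real.exp (σf t))
        = Real.cos (θf t) := by
      field_simp
    rw [hcos] at h1
    rw [hFim t ht, habsγ' t ht, hgs, h1]
    have h2 := (Real.exp_pos (ρ t)).ne'
    have h3 := (hsinφ t ht).ne'
    field_simp
    ring
  -- Gronwall 1 : θ ≤ 2φ
  have hθ2φ : ∀ t ∈ Icc (0:ℝ) 1, θf t - 2*φ t ≤ 0 := by
    apply aux_gronwall (u' := fun t => (F t).im - 2*(G t).im) (K := K)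
    · intro t ht
      exact (hθd t ht).sub ((hφd t ht).const_mul 2)
    · rw [hθf0, hφ0]; ring
    · intro t ht hpos
      have e1 := hFim2 t ht
      have e2 := hGim t ht
      have etrig := aux_trig (θf t) (φ t)
      have heq : (F t).im - 2*(G t).im = gs t * (kappaH γ t - Real.cos (θf t - 2*φ t)) := by
        rw [e1, e2, ← etrig]; ring
      rw [heq]
      have hgp := hgspos t ht
      have hgK := hKbd t ht
      have hκ1 : kappaH γ t ≤ 1 := (abs_le.mp (hκ t ht)).2
      have hcos1 : Real.cos (θf t - 2*φ t) ≤ 1 := Real.cos_le_one _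
      have hcos2 : 1 - Real.cos (θf t - 2*φ t) ≤ θf t - 2*φ t := aux_one_sub_cos_le hpos.le
      nlinarith [mul_nonneg (sub_nonneg.mpr hgK) (sub_nonneg.mpr hcos1),
        mul_nonneg hgp.le (sub_nonneg.mpr hκ1)]
  -- Gronwall 2 : π ≤ θ
  have hπθ : ∀ t ∈ Icc (0:ℝ) 1, π - θf t ≤ 0 := by
    apply aux_gronwall (u' := fun t => -(F t).im) (K := K)
    · intro t ht
      exact (hθd t ht).const_sub π
    · rw [hθf0]; ring
    · intro t ht hpos
      have e1 := hFim2 t ht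
      have heq : -(F t).im = gs t * (-kappaH γ t - Real.cos (π - θf t)) := by
        rw [e1, Real.cos_pi_sub]; ring
      rw [heq]
      have hgp := hgspos t ht
      have hgK := hKbd t ht
      have hκ1 : -kappaH γ t ≤ 1 := by
        have := (abs_le.mp (hκ t ht)).1; linarith
      have hcos1 : Real.cos (π - θf t) ≤ 1 := Real.cos_le_one _
      have hcos2 : 1 - Real.cos (π - θf t) ≤ π - θf t := aux_one_sub_cos_le hpos.le
      nlinarith [mul_nonneg (sub_nonneg.mpr hgK) (sub_nonneg.mpr hcos1),
        mul_nonneg hgp.le (sub_nonneg.mpr hκ1)]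
  -- φ stays below π
  have hφπ : ∀ t ∈ Icc (0:ℝ) 1, φ t < π := by
    intro t ht
    by_contra hge
    push_neg at hge
    have hcφ : ContinuousOn φ (Icc 0 t) := hφcont.mono (Icc_subset_Icc le_rfl ht.2)
    have hmem : π ∈ Icc (φ 0) (φ t) := by
      constructor
      · rw [hφ0]; linarith [Real.pi_pos]
      · exact hge
    obtain ⟨s, hs, hfs⟩ := intermediate_value_Icc ht.1 hcφ hmem
    have hsin := hsinφ s ⟨hs.1, hs.2.trans ht.2⟩
    rw [hfs, Real.sin_pi] at hsin
    exact lt_irrefl 0 hsin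
  -- the derivative of φ is positive
  have hG'pos : ∀ t ∈ Icc (0:ℝ) 1, 0 < (G t).im := by
    intro t ht
    rw [hGim t ht]
    have h1 := hθ2φ t ht
    have h2 := hπθ t ht
    have h3 := hφπ t ht
    have h4 : 0 < Real.sin (θf t - φ t) := by
      apply Real.sin_pos_of_pos_of_lt_pi <;> linarith
    exact mul_pos (hgspos t ht) (mul_pos (hsinφ t ht) h4)
  have hmono : StrictMonoOn φ (Icc 0 1) := by
    apply strictMonoOn_of_deriv_pos (convex_Icc 0 1) hφcont
    intro x hx
    rw [interior_Icc] at hx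
    have hx1 : x ∈ Icc (0:ℝ) 1 := Ioo_subset_Icc_self hx
    rw [(hφd x hx1).deriv]
    exact hG'pos x hx1
  have harg : ∀ t ∈ Icc (0:ℝ) 1, (γ t).arg = φ t := by
    intro t ht
    have hrange : φ t ∈ Ioc (-π) π := by
      constructor
      · have := hπθ t ht
        have := hθ2φ t ht
        have := Real.pi_pos
        linarith
      · exact (hφπ t ht).le
    rw [hApolar t ht, Complex.arg_real_mul _ (Real.exp_pos _), Complex.exp_mul_I]
    exact Complex.arg_cos_add_sin_mul_I hrange
  intro x hx y hy hxy
  simp only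
  rw [harg x hx, harg y hy]
  exact hmono hx hy hxy
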